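/- Dig-DEC is bounded by optimistic DEC plus η (stochastic setting): Let Π, O, Φ be finite nonempty sets and 𝓜 a finite nonempty set (the model class). For each M ∈ 𝓜 let V_M : Π → [0,1] (value function) and q_M : Π → Δ(O) (observation kernel). Let c : 𝓜 → Φ be a map, and for each φ ∈ Φ let π_φ ∈ Π and v_φ ∈ [0,1] be such that every M ∈ 𝓜 satisfies V_M(π_{c(M)}) = max_{π∈Π} V_M(π) = v_{c(M)}; write π_M = π_{c(M)}. Let D̄ : Π × Φ × 𝓜 → [0, ∞) be an arbitrary function. For ν ∈ Δ(𝓜) define the marginal ν_Φ(φ) = Σ_{M : c(M)=φ} ν(M) and, for π ∈ Π and o ∈ O with Σ_{M} ν(M) q_M(o|π) > 0, the posterior ν_Φ(φ | π, o) = Σ_{M : c(M)=φ} ν(M) q_M(o|π) / Σ_{M} ν(M) q_M(o|π). For η > 0 define dig-dec_η = sup_{ρ∈Δ(Φ)} inf_{p∈Δ(Π)} sup_{ν∈Δ(𝓜)} E_{π∼p} E_{M∼ν} [ V_M(π_M) − V_M(π) − (1/η) E_{o∼q_M(·|π)}[ KL(ν_Φ(·|π,o), ρ) ] − (1/η) E_{φ∼ρ}[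 D̄(π, φ, M) ] ], and o-dec_η = sup_{ρ∈Δ(Φ)} inf_{p∈Δ(Π)} sup_{ν∈Δ(𝓜)} E_{π∼p} E_{M∼ν} E_{φ∼ρ} [ v_φ − V_M(π) − (1/η) D̄(π, φ, M) ], where the expectations are taken in the extended reals (KL may equal +∞, making the inner expression −∞). Then for every η > 0, dig-dec_η ≤ o-dec_η + η. -/

import Mathlib

open Finset
open scoped ENNReal

noncomputable section

/-- Numerator of the posterior over infosets: `Σ_{M : c(M)=φ} ν(M) q_M(o|π)`. -/
def postNum {Pol Obs Phi Mod : Type*} [Fintype Mod] [DecidableEq Phi]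
    (q : Mod → Pol → Obs → ℝ) (c : Mod → Phi)
    (ν : Mod → ℝ) (π : Pol) (o : Obs) (φ : Phi) : ℝ :=
  ∑ M ∈ univ.filter (fun M => c M = φ), ν M * q M π o

/-- Marginal mass of an observation: `Σ_M ν(M) q_M(o|π)`. -/
def obsMass {Pol Obs Mod : Type*} [Fintype Mod]
    (q : Mod → Pol → Obs → ℝ) (ν : Mod → ℝ) (π : Pol) (o : Obs) : ℝ :=
  ∑ M, ν M * q M π o

/-- The posterior over infosets: `ν_Φ(φ | π, o)`. -/
def posterior {Pol Obs Phi Mod : Type*} [Fintype Mod] [DecidableEq Phi]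
    (q : Mod → Pol → Obs → ℝ) (c : Mod → Phi)
    (ν : Mod → ℝ) (π : Pol) (o : Obs) : Phi → ℝ :=
  fun φ => postNum q c ν π o φ / obsMass q ν π o

/-- KL divergence between distributions on a finite set, valued in `ℝ≥0∞`: it is
`Σ_φ a(φ) log(a(φ)/b(φ))` under absolute continuity (`0·log(0/b(φ)) = 0` automatic),
and `+∞` otherwise. -/
def klENN {Phi : Type*} [Fintype Phi] (a b : Phi → ℝ) : ℝ≥0∞ :=
  if ∀ φ, b φ = 0 → a φ = 0 then
    ENNReal.ofReal (∑ φ, a φ * Real.log (a φ / b φ))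
  else ⊤

/-- The expected posterior KL term
`E_{π∼p} E_{M∼ν} E_{o∼q_M(·|π)}[ KL(ν_Φ(·|π,o), ρ) ]`, in `ℝ≥0∞`; observations of zero
marginal mass contribute `0` (since `0 · ⊤ = 0` in `ℝ≥0∞`). -/
def expectedKL {Pol Obs Phi Mod : Type*}
    [Fintype Pol] [Fintype Obs] [Fintype Phi] [Fintype Mod] [DecidableEq Phi]
    (q : Mod → Pol → Obs → ℝ) (c : Mod → Phi)
    (p : Pol → ℝ) (ν : Mod → ℝ) (ρ : Phi → ℝ) : ℝ≥0∞ :=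
  ∑ π, ∑ o, ENNReal.ofReal (p π * obsMass q ν π o) * klENN (posterior q c ν π o) ρ

/-- The inner objective of the dual-information-gain DEC, valued in the extended reals
(it is `−∞` whenever the expected-KL term is `+∞`). -/
def digInner {Pol Obs Phi Mod : Type*}
    [Fintype Pol] [Fintype Obs] [Fintype Phi] [Fintype Mod] [DecidableEq Phi]
    (V : Mod → Pol → ℝ) (q : Mod → Pol → Obs → ℝ) (c : Mod → Phi) (piMap : Phi → Pol)
    (Dbar : Pol → Phi → Mod → ℝ) (η : ℝ)
    (ρ : Phi → ℝ) (p : Pol → ℝ) (ν : Mod → ℝ) : EReal :=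
  ((∑ π, p π * ∑ M, ν M *
      (V M (piMap (c M)) - V M π - (1 / η) * ∑ φ, ρ φ * Dbar π φ M) : ℝ) : EReal)
    - ((ENNReal.ofReal (1 / η) * expectedKL q c p ν ρ : ℝ≥0∞) : EReal)

/-- The dual-information-gain decision–estimation coefficient `dig-dec_η`. -/
def digDec {Pol Obs Phi Mod : Type*}
    [Fintype Pol] [Fintype Obs] [Fintype Phi] [Fintype Mod] [DecidableEq Phi]
    (V : Mod → Pol → ℝ) (q : Mod → Pol → Obs → ℝ) (c : Mod → Phi) (piMap : Phi → Pol)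
    (Dbar : Pol → Phi → Mod → ℝ) (η : ℝ) : EReal :=
  ⨆ ρ ∈ stdSimplex ℝ Phi, ⨅ p ∈ stdSimplex ℝ Pol, ⨆ ν ∈ stdSimplex ℝ Mod,
    digInner V q c piMap Dbar η ρ p ν

/-- The optimistic decision–estimation coefficient `o-dec_η`. -/
def oDec {Pol Phi Mod : Type*} [Fintype Pol] [Fintype Phi] [Fintype Mod]
    (V : Mod → Pol → ℝ) (v : Phi → ℝ) (Dbar : Pol → Phi → Mod → ℝ) (η : ℝ) : EReal :=
  ⨆ ρ ∈ stdSimplex ℝ Phi, ⨅ p ∈ stdSimplex ℝ Pol, ⨆ ν ∈ stdSimplex ℝ Mod,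
    ((∑ π, p π * ∑ M, ν M * ∑ φ, ρ φ * (v φ - V M π - (1 / η) * Dbar π φ M) : ℝ) : EReal)

private lemma exp_le_quad {x : ℝ} (h0 : 0 ≤ x) (h1 : x ≤ 1) :
    Real.exp x ≤ 1 + x + x ^ 2 := by
  have h := Real.exp_bound' h0 h1 (n := 3) (by norm_num)
  have : (∑ m ∈ Finset.range 3, x ^ m / m.factorial) = 1 + x + x ^ 2 / 2 := by
    simp [Finset.sum_range_succ]
  rw [this] at h
  have h3 : x ^ 3 ≤ x ^ 2 := pow_le_pow_of_le_one h0 h1 (by norm_num)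
  have : ((Nat.factorial 3 : ℝ)) = 6 := by norm_num [Nat.factorial]
  rw [this] at h
  nlinarith

private lemma lin_le_klterm {a b : ℝ} (t : ℝ) (ha : 0 ≤ a) (hb : 0 ≤ b)
    (hab : b = 0 → a = 0) :
    a * t ≤ a * Real.log (a / b) + b * Real.exp t - a := by
  rcases hb.eq_or_lt with hb0 | hb0
  · have ha0 := hab hb0.symm
    simp [ha0, ← hb0]
  rcases ha.eq_or_lt with ha0 | ha0
  · have : 0 ≤ b * Real.exp t := by positivity
    simp [← ha0]; linarith
  have hx : Real.log (b * Real.exp t / a) ≤ b * Real.exp t / a - 1 :=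
    Real.log_le_sub_one_of_pos (by positivity)
  have hlog : Real.log (b * Real.exp t / a) = Real.log b + t - Real.log a := by
    rw [Real.log_div (by positivity) ha0.ne', Real.log_mul hb0.ne' (Real.exp_ne_zero t),
      Real.log_exp]
  have hlog2 : Real.log (a / b) = Real.log a - Real.log b :=
    Real.log_div ha0.ne' hb0.ne'
  rw [hlog] at hx
  have hdiv : b * Real.exp t / a * a = b * Real.exp t := by
    field_simp
  nlinarith [mul_le_mul_of_nonneg_right hx ha]

private lemma klReal_nonneg {Phi : Type*} [Fintype Phi] {a b : Phi → ℝ}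
    (ha0 : ∀ φ, 0 ≤ a φ) (hb0 : ∀ φ, 0 ≤ b φ) (ha1 : ∑ φ, a φ = 1) (hb1 : ∑ φ, b φ = 1)
    (hac : ∀ φ, b φ = 0 → a φ = 0) :
    0 ≤ ∑ φ, a φ * Real.log (a φ / b φ) := by
  have h : ∀ φ, a φ * (0:ℝ) ≤ a φ * Real.log (a φ / b φ) + b φ * Real.exp 0 - a φ :=
    fun φ => lin_le_klterm 0 (ha0 φ) (hb0 φ) (hac φ)
  have := Finset.sum_le_sum (fun φ (_ : φ ∈ Finset.univ) => h φ)
  simp only [mul_zero, Real.exp_zero, mul_one, Finset.sum_const_zero, Finset.sum_sub_distrib,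
    Finset.sum_add_distrib, ha1, hb1] at this
  linarith

private lemma key_ineq {Phi : Type*} [Fintype Phi] {μ ρ v : Phi → ℝ} {η : ℝ} (hη : 0 < η)
    (hμ0 : ∀ φ, 0 ≤ μ φ) (hρ0 : ∀ φ, 0 ≤ ρ φ) (hμ1 : ∑ φ, μ φ = 1) (hρ1 : ∑ φ, ρ φ = 1)
    (hac : ∀ φ, ρ φ = 0 → μ φ = 0) (hv : ∀ φ, v φ ∈ Set.Icc (0:ℝ) 1) :
    ∑ φ, (μ φ - ρ φ) * v φ ≤ (1/η) * ∑ φ, μ φ * Real.log (μ φ / ρ φ) + η := by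
  set KL := ∑ φ, μ φ * Real.log (μ φ / ρ φ) with hKL
  have hKL0 : 0 ≤ KL := klReal_nonneg hμ0 hρ0 hμ1 hρ1 hac
  have hsplit : ∑ φ, (μ φ - ρ φ) * v φ = (∑ φ, μ φ * v φ) - ∑ φ, ρ φ * v φ := by
    rw [← Finset.sum_sub_distrib]
    exact Finset.sum_congr rfl fun φ _ => by ring
  have hμv1 : ∑ φ, μ φ * v φ ≤ 1 := by
    rw [← hμ1]
    exact Finset.sum_le_sum fun φ _ => mul_le_of_le_one_right (hμ0 φ) (hv φ).2
  have hρv0 : 0 ≤ ∑ φ, ρ φ * v φ :=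
    Finset.sum_nonneg fun φ _ => mul_nonneg (hρ0 φ) (hv φ).1
  rcases le_or_gt 1 η with hη1 | hη1
  · have : (0:ℝ) ≤ (1/η) * KL := by positivity
    rw [hsplit]; linarith
  have h3 : ∀ φ, μ φ * (η * v φ) ≤
      μ φ * Real.log (μ φ / ρ φ) + (ρ φ + η * (ρ φ * v φ) + η ^ 2 * ρ φ) - μ φ := by
    intro φ
    have hv1 := (hv φ).1
    have hv2 := (hv φ).2
    have hx0 : 0 ≤ η * v φ := mul_nonneg hη.le hv1
    have hx1 : η * v φ ≤ 1 := by nlinarith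
    have he := exp_le_quad hx0 hx1
    have hvsq : v φ ^ 2 ≤ 1 := by nlinarith
    have hsq : (η * v φ) ^ 2 ≤ η ^ 2 := by nlinarith [sq_nonneg η]
    have hmul : ρ φ * Real.exp (η * v φ) ≤ ρ φ * (1 + η * v φ + η ^ 2) :=
      mul_le_mul_of_nonneg_left (by linarith) (hρ0 φ)
    have h1 := lin_le_klterm (η * v φ) (hμ0 φ) (hρ0 φ) (hac φ)
    nlinarith
  have hsum := Finset.sum_le_sum (fun φ (_ : φ ∈ (Finset.univ : Finset Phi)) => h3 φ)
  have e1 : ∑ φ, μ φ * (η * v φ) = η * ∑ φ, μ φ * v φ := by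
    rw [Finset.mul_sum]
    exact Finset.sum_congr rfl fun φ _ => by ring
  have e2 : ∑ φ, (μ φ * Real.log (μ φ / ρ φ) + (ρ φ + η * (ρ φ * v φ) + η ^ 2 * ρ φ) - μ φ)
      = KL + η * (∑ φ, ρ φ * v φ) + η ^ 2 := by
    simp only [Finset.sum_sub_distrib, Finset.sum_add_distrib, ← Finset.mul_sum, hμ1, hρ1]
    ring
  rw [e1, e2] at hsum
  have hfin : (∑ φ, μ φ * v φ - ∑ φ, ρ φ * v φ - η) * η ≤ KL := by nlinarith
  have hdiv := (le_div_iff₀ hη).mpr hfin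
  rw [hsplit, one_div, inv_mul_eq_div]
  linarith

private lemma kl_marginal_le {Phi ι : Type*} [Fintype Phi] [Fintype ι]
    {w : ι → ℝ} {a : ι → Phi → ℝ} {ρ μ : Phi → ℝ}
    (hw : ∀ k, 0 ≤ w k)
    (ha0 : ∀ k, 0 < w k → ∀ φ, 0 ≤ a k φ)
    (ha1 : ∀ k, 0 < w k → ∑ φ, a k φ = 1)
    (hac : ∀ k, 0 < w k → ∀ φ, ρ φ = 0 → a k φ = 0)
    (hμ : ∀ φ, μ φ = ∑ k, w k * a k φ)
    (hμ1 : ∑ φ, μ φ = 1) :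
    ∑ φ, μ φ * Real.log (μ φ / ρ φ) ≤ ∑ k, w k * ∑ φ, a k φ * Real.log (a k φ / ρ φ) := by
  classical
  have hterm : ∀ (j : ι) (φ : Phi), 0 ≤ w j * a j φ := by
    intro j φ
    rcases (hw j).eq_or_lt with h | h
    · rw [← h, zero_mul]
    · exact mul_nonneg (hw j) (ha0 j h φ)
  have hμ0 : ∀ φ, 0 ≤ μ φ := by
    intro φ; rw [hμ φ]
    exact Finset.sum_nonneg fun k _ => hterm k φ
  have hwa : ∀ k φ, w k * a k φ ≤ μ φ := by
    intro k φ; rw [hμ φ]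
    exact Finset.single_le_sum (f := fun j => w j * a j φ) (fun j _ => hterm j φ)
      (Finset.mem_univ k)
  have claim : ∀ k, 0 < w k →
      ∑ φ, a k φ * Real.log (μ φ / ρ φ) ≤ ∑ φ, a k φ * Real.log (a k φ / ρ φ) := by
    intro k hk
    have hμa : ∀ φ, μ φ = 0 → a k φ = 0 := by
      intro φ h
      have h1 := hwa k φ
      rw [h] at h1
      have h2 := ha0 k hk φ
      nlinarith
    have hD : 0 ≤ ∑ φ, a k φ * Real.log (a k φ / μ φ) :=
      klReal_nonneg (ha0 k hk) hμ0 (ha1 k hk) hμ1 hμa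
    have hpt : ∀ φ, a k φ * Real.log (a k φ / ρ φ)
        = a k φ * Real.log (a k φ / μ φ) + a k φ * Real.log (μ φ / ρ φ) := by
      intro φ
      rcases (ha0 k hk φ).eq_or_lt with h0 | h0
      · simp [← h0]
      · have hρφ : ρ φ ≠ 0 := by
          intro hρφ
          have := hac k hk φ hρφ
          linarith
        have hμφ : 0 < μ φ := lt_of_lt_of_le (mul_pos hk h0) (hwa k φ)
        rw [Real.log_div h0.ne' hρφ, Real.log_div h0.ne' hμφ.ne', Real.log_div hμφ.ne' hρφ]
        ring
    calc ∑ φ, a k φ * Real.log (μ φ / ρ φ)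
        ≤ (∑ φ, a k φ * Real.log (a k φ / μ φ)) + ∑ φ, a k φ * Real.log (μ φ / ρ φ) := by
          linarith
      _ = ∑ φ, a k φ * Real.log (a k φ / ρ φ) := by
          rw [← Finset.sum_add_distrib]
          exact (Finset.sum_congr rfl fun φ _ => (hpt φ).symm)
  have main : ∑ k, w k * ∑ φ, a k φ * Real.log (μ φ / ρ φ)
      ≤ ∑ k, w k * ∑ φ, a k φ * Real.log (a k φ / ρ φ) := by
    refine Finset.sum_le_sum fun k _ => ?_
    rcases (hw k).eq_or_lt with h | h
    · rw [← h, zero_mul, zero_mul]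
    · exact mul_le_mul_of_nonneg_left (claim k h) (hw k)
  refine le_trans (le_of_eq ?_) main
  simp_rw [Finset.mul_sum]
  rw [Finset.sum_comm]
  refine Finset.sum_congr rfl fun φ _ => ?_
  rw [hμ φ, Finset.sum_mul]
  exact Finset.sum_congr rfl fun k _ => by ring

private lemma biInf_add_const_le {ι : Type*} (s : Set ι) (h : ι → EReal) (c : ℝ) :
    (⨅ p ∈ s, (h p + (c : EReal))) ≤ (⨅ p ∈ s, h p) + (c : EReal) := by
  rw [← EReal.sub_le_iff_le_add (.inl (EReal.coe_ne_bot c)) (.inl (EReal.coe_ne_top c))]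
  refine le_iInf₂ fun p hp => ?_
  have h1 : (⨅ p ∈ s, (h p + (c : EReal))) ≤ h p + (c : EReal) := iInf₂_le p hp
  calc (⨅ p ∈ s, (h p + (c : EReal))) - (c : EReal)
      ≤ (h p + (c : EReal)) - (c : EReal) := EReal.sub_le_sub h1 (le_refl _)
    _ = h p := EReal.add_sub_cancel_right

private lemma coe_ennreal_of_ne_top {x : ℝ≥0∞} (hx : x ≠ ⊤) :
    (x : EReal) = ((x.toReal : ℝ) : EReal) := by
  rw [← ENNReal.ofReal_toReal hx, EReal.coe_ennreal_ofReal,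
    max_eq_left ENNReal.toReal_nonneg, ENNReal.toReal_ofReal ENNReal.toReal_nonneg]

private lemma digInner_le {Pol Obs Phi Mod : Type*}
    [Fintype Pol] [Fintype Obs] [Fintype Phi] [DecidableEq Phi] [Fintype Mod]
    (V : Mod → Pol → ℝ) (q : Mod → Pol → Obs → ℝ)
    (hq0 : ∀ M π o, 0 ≤ q M π o) (hq1 : ∀ M π, ∑ o, q M π o = 1)
    (c : Mod → Phi) (piMap : Phi → Pol) (v : Phi → ℝ)
    (hv : ∀ φ, v φ ∈ Set.Icc (0 : ℝ) 1)
    (hval : ∀ M, V M (piMap (c M)) = v (c M))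
    (Dbar : Pol → Phi → Mod → ℝ)
    {η : ℝ} (hη : 0 < η)
    {ρ : Phi → ℝ} {p : Pol → ℝ} {ν : Mod → ℝ}
    (hρ : ρ ∈ stdSimplex ℝ Phi) (hp : p ∈ stdSimplex ℝ Pol) (hν : ν ∈ stdSimplex ℝ Mod) :
    digInner V q c piMap Dbar η ρ p ν ≤
      ((∑ π, p π * ∑ M, ν M * ∑ φ, ρ φ * (v φ - V M π - (1 / η) * Dbar π φ M) : ℝ) : EReal)
        + (η : EReal) := by
  obtain ⟨hρ0, hρ1⟩ := hρ
  obtain ⟨hp0, hp1⟩ := hp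
  obtain ⟨hν0, hν1⟩ := hν
  have hη' : (0:ℝ) < 1 / η := by positivity
  by_cases hEtop : expectedKL q c p ν ρ = ⊤
  · unfold digInner
    rw [hEtop, ENNReal.mul_top (by simp only [ne_eq, ENNReal.ofReal_eq_zero, not_le]; exact hη'),
      EReal.coe_ennreal_top, EReal.sub_top]
    exact bot_le
  -- finite expected-KL case
  have hmass0 : ∀ π o, 0 ≤ obsMass q ν π o := fun π o =>
    Finset.sum_nonneg fun M _ => mul_nonneg (hν0 M) (hq0 M π o)
  have hnum0 : ∀ π o φ, 0 ≤ postNum q c ν π o φ := fun π o φ =>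
    Finset.sum_nonneg fun M _ => mul_nonneg (hν0 M) (hq0 M π o)
  have hnum_le : ∀ π o φ, postNum q c ν π o φ ≤ obsMass q ν π o := fun π o φ =>
    Finset.sum_le_sum_of_subset_of_nonneg (Finset.filter_subset _ _)
      (fun M _ _ => mul_nonneg (hν0 M) (hq0 M π o))
  set w : Pol × Obs → ℝ := fun k => p k.1 * obsMass q ν k.1 k.2 with hw_def
  set a : Pol × Obs → Phi → ℝ := fun k => posterior q c ν k.1 k.2 with ha_def
  have hw0 : ∀ k, 0 ≤ w k := fun k => mul_nonneg (hp0 k.1) (hmass0 k.1 k.2)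
  have hEsum : expectedKL q c p ν ρ
      = ∑ k : Pol × Obs, ENNReal.ofReal (w k) * klENN (a k) ρ := by
    rw [expectedKL, Fintype.sum_prod_type]
  have hterm_ne : ∀ k : Pol × Obs, ENNReal.ofReal (w k) * klENN (a k) ρ ≠ ⊤ := by
    intro k hk
    exact hEtop (by rw [hEsum, ENNReal.sum_eq_top]; exact ⟨k, Finset.mem_univ k, hk⟩)
  have hktop : ∀ k, 0 < w k → klENN (a k) ρ ≠ ⊤ := by
    intro k hk h
    apply hterm_ne k
    rw [h, ENNReal.mul_top (by simp only [ne_eq, ENNReal.ofReal_eq_zero, not_le]; exact hk)]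
  have hkcond : ∀ k, 0 < w k → ∀ φ, ρ φ = 0 → a k φ = 0 := by
    intro k hk
    by_contra hc
    exact hktop k hk (by rw [klENN, if_neg hc])
  have hcomp : ∀ k : Pol × Obs, 0 < w k → 0 < p k.1 ∧ 0 < obsMass q ν k.1 k.2 := by
    intro k hk
    rcases mul_pos_iff.mp hk with h | h
    · exact h
    · exact absurd h.1 (not_lt.mpr (hp0 k.1))
  have hsum_num : ∀ π o, ∑ φ, postNum q c ν π o φ = obsMass q ν π o := by
    intro π o
    simp only [postNum, obsMass]
    exact Finset.sum_fiberwise_of_maps_to (fun M _ => Finset.mem_univ (c M)) _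
  have ha0' : ∀ k, 0 < w k → ∀ φ, 0 ≤ a k φ := by
    intro k hk φ
    exact div_nonneg (hnum0 _ _ _) (hmass0 _ _)
  have ha1 : ∀ k, 0 < w k → ∑ φ, a k φ = 1 := by
    intro k hk
    have hm := (hcomp k hk).2
    simp only [ha_def, posterior]
    rw [← Finset.sum_div, hsum_num, div_self hm.ne']
  set μ : Phi → ℝ := fun φ => ∑ M ∈ Finset.univ.filter (fun M => c M = φ), ν M with hμ_def
  have hμ0 : ∀ φ, 0 ≤ μ φ := fun φ => Finset.sum_nonneg fun M _ => hν0 M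
  have hμ1 : ∑ φ, μ φ = 1 := by
    rw [← hν1]
    exact Finset.sum_fiberwise_of_maps_to (fun M _ => Finset.mem_univ (c M)) ν
  have hwa_eq : ∀ (k : Pol × Obs) φ, w k * a k φ = p k.1 * postNum q c ν k.1 k.2 φ := by
    intro k φ
    rcases (hmass0 k.1 k.2).eq_or_lt with hm | hm
    · have hnz : postNum q c ν k.1 k.2 φ = 0 :=
        le_antisymm ((hnum_le _ _ _).trans_eq hm.symm) (hnum0 _ _ _)
      simp [hw_def, ha_def, posterior, ← hm, hnz]
    · simp only [hw_def, ha_def, posterior]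
      field_simp
  have hmix : ∀ φ, μ φ = ∑ k : Pol × Obs, w k * a k φ := by
    intro φ
    simp_rw [hwa_eq]
    rw [Fintype.sum_prod_type]
    have e : ∀ π : Pol, ∑ o, p π * postNum q c ν π o φ = p π * μ φ := by
      intro π
      rw [← Finset.mul_sum]
      congr 1
      simp only [postNum]
      rw [Finset.sum_comm]
      refine Finset.sum_congr rfl fun M hM => ?_
      rw [← Finset.mul_sum, hq1 M π, mul_one]
    simp_rw [e]
    rw [← Finset.sum_mul, hp1, one_mul]
  have hμac : ∀ φ, ρ φ = 0 → μ φ = 0 := by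
    intro φ hφ
    rw [hmix φ]
    refine Finset.sum_eq_zero fun k _ => ?_
    rcases (hw0 k).eq_or_lt with h | h
    · rw [← h, zero_mul]
    · rw [hkcond k h φ hφ, mul_zero]
  have hklnn : ∀ k, 0 < w k → 0 ≤ ∑ φ, a k φ * Real.log (a k φ / ρ φ) := fun k hk =>
    klReal_nonneg (ha0' k hk) hρ0 (ha1 k hk) hρ1 (hkcond k hk)
  have hEreal : (expectedKL q c p ν ρ).toReal
      = ∑ k : Pol × Obs, w k * ∑ φ, a k φ * Real.log (a k φ / ρ φ) := by
    rw [hEsum, ENNReal.toReal_sum (fun k _ => hterm_ne k)]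
    refine Finset.sum_congr rfl fun k _ => ?_
    rcases (hw0 k).eq_or_lt with h | h
    · rw [← h]; simp
    · rw [klENN, if_pos (hkcond k h), ENNReal.toReal_mul,
        ENNReal.toReal_ofReal (hw0 k), ENNReal.toReal_ofReal (hklnn k h)]
  have hchain : ∑ φ, μ φ * Real.log (μ φ / ρ φ) ≤ (expectedKL q c p ν ρ).toReal := by
    rw [hEreal]
    exact kl_marginal_le hw0 ha0' ha1 hkcond hmix hμ1
  have hkey := key_ineq hη hμ0 hρ0 hμ1 hρ1 hμac hv
  have hMμ : ∑ M, ν M * v (c M) = ∑ φ, μ φ * v φ := by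
    rw [← Finset.sum_fiberwise_of_maps_to (fun M _ => Finset.mem_univ (c M))
        (fun M => ν M * v (c M))]
    refine Finset.sum_congr rfl fun φ _ => ?_
    calc ∑ M ∈ Finset.univ.filter (fun M => c M = φ), ν M * v (c M)
        = ∑ M ∈ Finset.univ.filter (fun M => c M = φ), ν M * v φ :=
          Finset.sum_congr rfl fun M hM => by rw [(Finset.mem_filter.mp hM).2]
      _ = μ φ * v φ := by rw [← Finset.sum_mul]
  set A := (∑ π, p π * ∑ M, ν M *
      (V M (piMap (c M)) - V M π - (1 / η) * ∑ φ, ρ φ * Dbar π φ M) : ℝ) with hA_def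
  set B := (∑ π, p π * ∑ M, ν M * ∑ φ, ρ φ * (v φ - V M π - (1 / η) * Dbar π φ M) : ℝ)
    with hB_def
  have hinner : ∀ π M, ∑ φ, ρ φ * (v φ - V M π - (1 / η) * Dbar π φ M)
      = (∑ φ, ρ φ * v φ) - V M π - (1 / η) * ∑ φ, ρ φ * Dbar π φ M := by
    intro π M
    have e : ∀ φ, ρ φ * (v φ - V M π - (1 / η) * Dbar π φ M)
        = ρ φ * v φ - ρ φ * V M π - (1/η) * (ρ φ * Dbar π φ M) := fun φ => by ring
    simp_rw [e]
    rw [Finset.sum_sub_distrib, Finset.sum_sub_distrib, ← Finset.sum_mul, hρ1, one_mul,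
      ← Finset.mul_sum]
  have hA2 : ∀ π M, ν M * (V M (piMap (c M)) - V M π - (1 / η) * ∑ φ, ρ φ * Dbar π φ M)
      - ν M * ∑ φ, ρ φ * (v φ - V M π - (1 / η) * Dbar π φ M)
      = ν M * v (c M) - ν M * (∑ φ, ρ φ * v φ) := by
    intro π M
    rw [hinner π M, hval M]
    ring
  have hAB : A - B = ∑ φ, (μ φ - ρ φ) * v φ := by
    have e1 : A - B = ∑ π, p π * ∑ M, (ν M * v (c M) - ν M * (∑ φ, ρ φ * v φ)) := by
      rw [hA_def, hB_def, ← Finset.sum_sub_distrib]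
      refine Finset.sum_congr rfl fun π _ => ?_
      rw [← mul_sub, ← Finset.sum_sub_distrib]
      congr 1
      exact Finset.sum_congr rfl fun M _ => hA2 π M
    rw [e1]
    have e2 : ∑ M, (ν M * v (c M) - ν M * (∑ φ, ρ φ * v φ))
        = (∑ φ, μ φ * v φ) - ∑ φ, ρ φ * v φ := by
      rw [Finset.sum_sub_distrib, hMμ, ← Finset.sum_mul, hν1, one_mul]
    rw [e2]
    rw [← Finset.sum_mul, hp1, one_mul, ← Finset.sum_sub_distrib]
    exact Finset.sum_congr rfl fun φ _ => by ring
  have hreal : A - (1/η) * (expectedKL q c p ν ρ).toReal ≤ B + η := by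
    have h1 : (1/η) * ∑ φ, μ φ * Real.log (μ φ / ρ φ)
        ≤ (1/η) * (expectedKL q c p ν ρ).toReal :=
      mul_le_mul_of_nonneg_left hchain hη'.le
    linarith
  have hne : ENNReal.ofReal (1/η) * expectedKL q c p ν ρ ≠ ⊤ :=
    ENNReal.mul_ne_top ENNReal.ofReal_ne_top hEtop
  have hcoe : ((ENNReal.ofReal (1/η) * expectedKL q c p ν ρ : ℝ≥0∞) : EReal)
      = (((1/η) * (expectedKL q c p ν ρ).toReal : ℝ) : EReal) := by
    rw [coe_ennreal_of_ne_top hne, ENNReal.toReal_mul, ENNReal.toReal_ofReal hη'.le]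
  simp only [digInner]
  rw [← hA_def, hcoe, ← EReal.coe_sub, ← EReal.coe_add]
  exact EReal.coe_le_coe_iff.mpr hreal

/-- Dig-DEC is bounded by optimistic DEC plus `η` (stochastic setting): under the
partitioned-model-class assumptions, `dig-dec_η ≤ o-dec_η + η` for every `η > 0`. -/
theorem digDec_le_oDec_add_eta
    {Pol Obs Phi Mod : Type*}
    [Fintype Pol] [Nonempty Pol] [Fintype Obs] [Nonempty Obs]
    [Fintype Phi] [Nonempty Phi] [DecidableEq Phi] [Fintype Mod] [Nonempty Mod]
    (V : Mod → Pol → ℝ) (hV : ∀ M π, V M π ∈ Set.Icc (0 : ℝ) 1)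
    (q : Mod → Pol → Obs → ℝ)
    (hq0 : ∀ M π o, 0 ≤ q M π o) (hq1 : ∀ M π, ∑ o, q M π o = 1)
    (c : Mod → Phi) (piMap : Phi → Pol) (v : Phi → ℝ)
    (hv : ∀ φ, v φ ∈ Set.Icc (0 : ℝ) 1)
    (hopt : ∀ M π, V M π ≤ V M (piMap (c M)))
    (hval : ∀ M, V M (piMap (c M)) = v (c M))
    (Dbar : Pol → Phi → Mod → ℝ) (hD : ∀ π φ M, 0 ≤ Dbar π φ M)
    (η : ℝ) (hη : 0 < η) :
    digDec V q c piMap Dbar η ≤ oDec V v Dbar η + (η : EReal) := by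
  rw [digDec]
  refine iSup₂_le fun ρ hρ => ?_
  have hstep : ∀ p₀ ∈ stdSimplex ℝ Pol,
      (⨆ ν ∈ stdSimplex ℝ Mod, digInner V q c piMap Dbar η ρ p₀ ν)
        ≤ (⨆ ν ∈ stdSimplex ℝ Mod,
            ((∑ π, p₀ π * ∑ M, ν M * ∑ φ, ρ φ * (v φ - V M π - (1 / η) * Dbar π φ M) : ℝ) :
              EReal))
          + (η : EReal) := by
    intro p₀ hp₀
    refine iSup₂_le fun ν hν => ?_
    refine le_trans (digInner_le V q hq0 hq1 c piMap v hv hval Dbar hη hρ hp₀ hν) ?_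
    refine add_le_add_left ?_ _
    exact le_iSup₂ (f := fun ν (_ : ν ∈ stdSimplex ℝ Mod) =>
      ((∑ π, p₀ π * ∑ M, ν M * ∑ φ, ρ φ * (v φ - V M π - (1 / η) * Dbar π φ M) : ℝ) : EReal))
      ν hν
  have h2 : (⨅ p₀ ∈ stdSimplex ℝ Pol, ⨆ ν ∈ stdSimplex ℝ Mod,
        digInner V q c piMap Dbar η ρ p₀ ν)
      ≤ ⨅ p₀ ∈ stdSimplex ℝ Pol,
          ((⨆ ν ∈ stdSimplex ℝ Mod,
            ((∑ π, p₀ π * ∑ M, ν M * ∑ φ, ρ φ * (v φ - V M π - (1 / η) * Dbar π φ M) : ℝ) :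
              EReal)) + (η : EReal)) :=
    le_iInf₂ fun p₀ hp₀ => (iInf₂_le p₀ hp₀).trans (hstep p₀ hp₀)
  refine h2.trans ?_
  refine le_trans (biInf_add_const_le (stdSimplex ℝ Pol) _ η) ?_
  refine add_le_add_left ?_ _
  rw [oDec]
  exact le_iSup₂ (f := fun ρ (_ : ρ ∈ stdSimplex ℝ Phi) => ⨅ p₀ ∈ stdSimplex ℝ Pol,
    ⨆ ν ∈ stdSimplex ℝ Mod,
      ((∑ π, p₀ π * ∑ M, ν M * ∑ φ, ρ φ * (v φ - V M π - (1 / η) * Dbar π φ M) : ℝ) : EReal))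
    ρ hρ

end
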